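/- For every m ≥ 1, the subgroup of the direct product group ℂ^× × GL(m,ℂ) generated by the set {(i, R_a)·(i, R_b) : a, b ∈ ℂ^m, ∑ a_i² = ∑ b_i² = 1} is exactly {(ε, g) : ε ∈ {1,−1}, g ∈ SO(m,ℂ)}. In particular this group is isomorphic to SO(m,ℂ) × ℤ/2ℤ, and the projection (ε,g) ↦ g is a surjective homomorphism onto SO(m,ℂ) each of whose fibers has exactly two elements. -/

import Mathlib

open Matrix
open scoped MatrixGroups

/-- The reflection matrix `R_a = I - 2·aᵀa` associated to a vector `a` with `⟨a,a⟩ = 1`. -/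
noncomputable def reflMat {m : ℕ} (a : Fin m → ℂ) : Matrix (Fin m) (Fin m) ℂ :=
  1 - (2 : ℂ) • Matrix.of (fun i j => a i * a j)

namespace CD7
open Module
variable {V : Type*} [AddCommGroup V] [Module ℂ V]

noncomputable def rfl' (Φ : LinearMap.BilinForm ℂ V) (v : V) : V →ₗ[ℂ] V :=
  LinearMap.id - (2 / Φ v v) • ((LinearMap.toSpanSingleton ℂ V v).comp (Φ v))

lemma rfl'_apply (Φ : LinearMap.BilinForm ℂ V) (v x : V) :
    rfl' Φ v x = x - (2 * Φ v x / Φ v v) • v := by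
  simp [rfl', LinearMap.toSpanSingleton, smul_smul, LinearMap.smul_apply]
  rw [div_mul_eq_mul_div]

variable {Φ : LinearMap.BilinForm ℂ V}

lemma rfl'_fix {v x : V} (h : Φ v x = 0) : rfl' Φ v x = x := by
  rw [rfl'_apply, h]; simp

lemma rfl'_preserves (hΦ : Φ.IsSymm) {v : V} (hv : Φ v v ≠ 0) (x y : V) :
    Φ (rfl' Φ v x) (rfl' Φ v y) = Φ x y := by
  rw [rfl'_apply, rfl'_apply]
  have hxv : Φ x v = Φ v x := (hΦ.eq v x).symm
  simp only [map_sub, _root_.map_smul, LinearMap.sub_apply, LinearMap.smul_apply, smul_eq_mul]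
  rw [hxv]
  field_simp
  ring

lemma rfl'_rfl' {v : V} (hv : Φ v v ≠ 0) (x : V) : rfl' Φ v (rfl' Φ v x) = x := by
  rw [rfl'_apply, rfl'_apply]
  simp only [map_sub, _root_.map_smul, smul_eq_mul]
  match_scalars
  · ring
  · field_simp
    ring

lemma rfl'_smul {v : V} (hv : Φ v v ≠ 0) {c : ℂ} (hc : c ≠ 0) :
    rfl' Φ (c • v) = rfl' Φ v := by
  ext x
  rw [rfl'_apply, rfl'_apply]
  simp only [_root_.map_smul, LinearMap.smul_apply, smul_eq_mul, smul_smul]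
  match_scalars
  · ring
  · field_simp

def reflSet (Φ : LinearMap.BilinForm ℂ V) : Set (V →ₗ[ℂ] V) :=
  {f | ∃ v, Φ v v ≠ 0 ∧ f = rfl' Φ v}

lemma closure_preserves (hΦ : Φ.IsSymm) {f : V →ₗ[ℂ] V}
    (hf : f ∈ Submonoid.closure (reflSet Φ)) : ∀ x y, Φ (f x) (f y) = Φ x y := by
  induction hf using Submonoid.closure_induction with
  | mem g hg => obtain ⟨v, hv, rfl⟩ := hg; exact rfl'_preserves hΦ hv
  | one => intro x y; rfl
  | mul g h _ _ ihg ihh => intro x y; simpa using (ihg (h x) (h y)).trans (ihh x y)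

variable {V : Type*} [AddCommGroup V] [Module ℂ V]


variable {Φ : LinearMap.BilinForm ℂ V}
lemma lift_refl (hΦ : Φ.IsSymm) {v : V} (hv : Φ v v ≠ 0)
    {h : ↥(Φ.orthogonal (ℂ ∙ v)) →ₗ[ℂ] ↥(Φ.orthogonal (ℂ ∙ v))}
    (hh : h ∈ Submonoid.closure (reflSet (Φ.restrict (Φ.orthogonal (ℂ ∙ v))))) :
    ∃ H ∈ Submonoid.closure (reflSet Φ), H v = v ∧
      ∀ w : ↥(Φ.orthogonal (ℂ ∙ v)), H w = h w := by
  induction hh using Submonoid.closure_induction with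
  | mem g hg =>
      obtain ⟨u, hu, rfl⟩ := hg
      have hu' : Φ (u : V) (u : V) ≠ 0 := hu
      have huv : Φ (u : V) v = 0 := by
        have h1 : Φ v (u : V) = 0 := u.2 v (Submodule.mem_span_singleton_self v)
        have h2 := hΦ.eq (u : V) v
        simpa [h1] using h2
      refine ⟨rfl' Φ (u : V), Submonoid.subset_closure ⟨u, hu', Eq.refl _⟩,
        rfl'_fix huv, fun w => ?_⟩
      rw [rfl'_apply]
      have : ((rfl' (Φ.restrict (Φ.orthogonal (ℂ ∙ v))) u w : ↥(Φ.orthogonal (ℂ ∙ v))) : V)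
          = (w : V) - (2 * Φ (u : V) (w : V) / Φ (u : V) (u : V)) • (u : V) := by
        rw [rfl'_apply]
        push_cast
        rfl
      rw [this]
  | one => exact ⟨1, one_mem _, rfl, fun w => rfl⟩
  | mul g₁ g₂ _ _ ih1 ih2 =>
      obtain ⟨H₁, hH₁, hH₁v, hH₁w⟩ := ih1
      obtain ⟨H₂, hH₂, hH₂v, hH₂w⟩ := ih2
      refine ⟨H₁ * H₂, mul_mem hH₁ hH₂, ?_, fun w => ?_⟩
      · show H₁ (H₂ v) = v
        rw [hH₂v, hH₁v]
      · show H₁ (H₂ w) = _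
        rw [hH₂w, hH₁w]
        rfl

theorem cartan_dieudonne : ∀ (n : ℕ) (V : Type) [AddCommGroup V] [Module ℂ V]
    [FiniteDimensional ℂ V], finrank ℂ V = n →
    ∀ (Φ : LinearMap.BilinForm ℂ V), Φ.IsSymm → Φ.Nondegenerate →
    ∀ f : V →ₗ[ℂ] V, (∀ x y, Φ (f x) (f y) = Φ x y) →
    f ∈ Submonoid.closure (reflSet Φ) := by
  intro n
  induction n with
  | zero =>
      intro V _ _ _ hrk Φ _ _ f _
      haveI : Subsingleton V := finrank_zero_iff.mp hrk
      have : f = 1 := Subsingleton.elim f 1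
      rw [this]; exact one_mem _
  | succ n ih =>
      intro V _ _ _ hrk Φ hΦ hnd f hf
      have hne : Φ ≠ 0 := by
        intro h0
        have hss : Subsingleton V := ⟨fun a b => by
          have ha := hnd.1 a (fun y => by rw [h0]; rfl)
          have hb := hnd.1 b (fun y => by rw [h0]; rfl)
          rw [ha, hb]⟩
        rw [finrank_zero_iff.mpr hss] at hrk
        exact Nat.succ_ne_zero n hrk.symm
      haveI : Invertible (2:ℂ) := invertibleOfNonzero two_ne_zero
      obtain ⟨v, hv⟩ := LinearMap.BilinForm.exists_bilinForm_self_ne_zero hne (LinearMap.BilinForm.isSymm_iff.1 hΦ)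
      have hvv : Φ v v ≠ 0 := hv
      have hfv : Φ (f v) (f v) = Φ v v := hf v v
      have hsym : Φ (f v) v = Φ v (f v) := hΦ.eq (f v) v
      obtain ⟨s, t, hs, ht, hts, hsf⟩ :
          ∃ s t : V →ₗ[ℂ] V, s ∈ Submonoid.closure (reflSet Φ) ∧
            t ∈ Submonoid.closure (reflSet Φ) ∧ t * s = 1 ∧ s (f v) = v := by
        by_cases h1 : f v = v
        · exact ⟨1, 1, one_mem _, one_mem _, mul_one 1, by simpa using h1⟩
        have hd : Φ (f v - v) (f v - v) = 2 * (Φ v v - Φ v (f v)) := by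
          simp only [map_sub, LinearMap.sub_apply]
          rw [hfv, hsym]; ring
        by_cases h2 : Φ (f v - v) (f v - v) = 0
        · -- second reflection case
          have hvfv : Φ v (f v) = Φ v v := by
            rw [hd] at h2
            have := mul_eq_zero.mp h2
            rcases this with h | h
            · exact absurd h two_ne_zero
            · linear_combination -h
          have hbb : Φ (f v + v) (f v + v) = 4 * Φ v v := by
            simp only [map_add, LinearMap.add_apply]
            rw [hfv, hsym, hvfv]; ring
          have hbb0 : Φ (f v + v) (f v + v) ≠ 0 := by
            rw [hbb]; intro h; exact hvv (by
              have := mul_eq_zero.mp h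
              rcases this with h | h
              · norm_num at h
              · exact h)
          refine ⟨rfl' Φ v * rfl' Φ (f v + v), rfl' Φ (f v + v) * rfl' Φ v,
            mul_mem (Submonoid.subset_closure ⟨v, hvv, Eq.refl _⟩)
              (Submonoid.subset_closure ⟨_, hbb0, Eq.refl _⟩),
            mul_mem (Submonoid.subset_closure ⟨_, hbb0, Eq.refl _⟩)
              (Submonoid.subset_closure ⟨v, hvv, Eq.refl _⟩), ?_, ?_⟩
          · ext x
            show rfl' Φ (f v + v) (rfl' Φ v (rfl' Φ v (rfl' Φ (f v + v) x))) = x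
            rw [rfl'_rfl' hvv, rfl'_rfl' hbb0]
          · show rfl' Φ v (rfl' Φ (f v + v) (f v)) = v
            have hb1 : rfl' Φ (f v + v) (f v) = -v := by
              rw [rfl'_apply]
              have hn : Φ (f v + v) (f v) = 2 * Φ v v := by
                simp only [map_add, LinearMap.add_apply]
                rw [hfv, hvfv]; ring
              rw [hn, hbb]
              have hc : 2 * (2 * Φ v v) / (4 * Φ v v) = 1 := by
                field_simp; ring
              rw [hc, one_smul]
              abel
            rw [hb1]
            have : rfl' Φ v (-v) = -(rfl' Φ v v) := by rw [map_neg]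
            rw [this, rfl'_apply]
            have hc : 2 * Φ v v / Φ v v = 2 := by field_simp
            rw [hc]
            module
        · -- single reflection case
          refine ⟨rfl' Φ (f v - v), rfl' Φ (f v - v),
            Submonoid.subset_closure ⟨_, h2, Eq.refl _⟩,
            Submonoid.subset_closure ⟨_, h2, Eq.refl _⟩, ?_, ?_⟩
          · ext x
            show rfl' Φ (f v - v) (rfl' Φ (f v - v) x) = x
            exact rfl'_rfl' h2 x
          · rw [rfl'_apply]
            have hn : Φ (f v - v) (f v) = Φ v v - Φ v (f v) := by
              simp only [map_sub, LinearMap.sub_apply]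
              rw [hfv]
            have hx : Φ v v - Φ v (f v) ≠ 0 := by
              intro h
              apply h2
              rw [hd, h, mul_zero]
            rw [hn, hd]
            have hc : 2 * (Φ v v - Φ v (f v)) / (2 * (Φ v v - Φ v (f v))) = 1 :=
              div_self (by intro h; exact hx (by
                have := mul_eq_zero.mp h
                rcases this with h | h
                · exact absurd h two_ne_zero
                · exact h))
            rw [hc, one_smul]
            abel
      set g := s * f with hg
      have hgo : ∀ x y, Φ (g x) (g y) = Φ x y := fun x y => by
        have h1 := closure_preserves hΦ hs (f x) (f y)
        have h2 := hf x y
        show Φ (s (f x)) (s (f y)) = Φ x y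
        rw [h1, h2]
      have hgv : g v = v := hsf
      have hcompl := LinearMap.BilinForm.isCompl_span_singleton_orthogonal (B := Φ) hv
      have hv0 : v ≠ 0 := fun h => hvv (by rw [h]; simp)
      have hrkW : finrank ℂ ↥(Φ.orthogonal (ℂ ∙ v)) = n := by
        have h1 := Submodule.finrank_add_eq_of_isCompl hcompl
        rw [finrank_span_singleton hv0, hrk] at h1
        omega
      have hndW : (Φ.restrict (Φ.orthogonal (ℂ ∙ v))).Nondegenerate :=
        LinearMap.BilinForm.restrict_nondegenerate_orthogonal_spanSingleton Φ hnd hΦ.isRefl hv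
      have hΦW : (Φ.restrict (Φ.orthogonal (ℂ ∙ v))).IsSymm := ⟨fun x y => hΦ.eq x y⟩
      have hgW : ∀ w ∈ Φ.orthogonal (ℂ ∙ v), g w ∈ Φ.orthogonal (ℂ ∙ v) := by
        intro w hw u hu
        obtain ⟨c, rfl⟩ := Submodule.mem_span_singleton.mp hu
        have h1 : Φ v (g w) = 0 := by
          have h2 := hgo v w
          rw [hgv] at h2
          rw [h2]
          exact hw v (Submodule.mem_span_singleton_self v)
        show Φ (c • v) (g w) = 0
        rw [_root_.map_smul, LinearMap.smul_apply, h1, smul_zero]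
      have hg'o : ∀ x y : ↥(Φ.orthogonal (ℂ ∙ v)),
          (Φ.restrict (Φ.orthogonal (ℂ ∙ v))) (g.restrict hgW x) (g.restrict hgW y)
            = (Φ.restrict (Φ.orthogonal (ℂ ∙ v))) x y := fun x y => hgo x y
      have hIH := ih ↥(Φ.orthogonal (ℂ ∙ v)) hrkW (Φ.restrict (Φ.orthogonal (ℂ ∙ v)))
        hΦW hndW (g.restrict hgW) hg'o
      obtain ⟨H, hH, hHv, hHw⟩ := lift_refl hΦ hvv hIH
      have hgH : g = H := by
        ext x
        have hx : x ∈ (ℂ ∙ v) ⊔ Φ.orthogonal (ℂ ∙ v) := by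
          rw [hcompl.sup_eq_top]; trivial
        obtain ⟨y, hy, w, hw, rfl⟩ := Submodule.mem_sup.mp hx
        obtain ⟨c, rfl⟩ := Submodule.mem_span_singleton.mp hy
        rw [map_add, map_add, _root_.map_smul, _root_.map_smul, hgv, hHv]
        congr 1
        exact ((hHw ⟨w, hw⟩).trans rfl).symm
      have hfg : f = t * g := by
        rw [hg, ← mul_assoc, hts, one_mul]
      rw [hfg]
      exact mul_mem ht (hgH ▸ hH)

variable {V : Type*} [AddCommGroup V] [Module ℂ V]


/-! ### The standard bilinear form on `Fin m → ℂ` -/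

noncomputable def stdB (m : ℕ) : LinearMap.BilinForm ℂ (Fin m → ℂ) :=
  LinearMap.mk₂ ℂ (fun x y => x ⬝ᵥ y)
    (fun x y z => add_dotProduct x y z)
    (fun c x y => smul_dotProduct c x y)
    (fun x y z => dotProduct_add x y z)
    (fun c x y => dotProduct_smul c x y)

lemma stdB_apply {m : ℕ} (x y : Fin m → ℂ) : stdB m x y = x ⬝ᵥ y := rfl

lemma stdB_symm (m : ℕ) : (stdB m).IsSymm := ⟨fun x y => by
  simpa [stdB_apply] using dotProduct_comm x y⟩

lemma stdB_nondeg (m : ℕ) : (stdB m).Nondegenerate := by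
  constructor
  · intro x h
    funext i
    have := h (Pi.single i 1)
    rw [stdB_apply, dotProduct_single] at this
    simpa using this
  · intro x h
    funext i
    have := h (Pi.single i 1)
    rw [stdB_apply, single_dotProduct] at this
    simpa using this

lemma stdB_self {m : ℕ} (a : Fin m → ℂ) : stdB m a a = ∑ i, a i ^ 2 := by
  rw [stdB_apply]
  simp [dotProduct, sq]

/-- the set of unit reflection matrices -/
def reflTset (m : ℕ) : Set (Matrix (Fin m) (Fin m) ℂ) :=
  {M | ∃ a, (∑ i, a i ^ 2 = 1) ∧ M = reflMat a}

/-- products of two reflections -/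
def pairTset (m : ℕ) : Set (Matrix (Fin m) (Fin m) ℂ) :=
  {M | ∃ a b, (∑ i, a i ^ 2 = 1) ∧ (∑ i, b i ^ 2 = 1) ∧ M = reflMat a * reflMat b}

lemma reflMat_mulVec {m : ℕ} (a : Fin m → ℂ) (x : Fin m → ℂ) :
    reflMat a *ᵥ x = x - (2 * (a ⬝ᵥ x)) • a := by
  rw [reflMat, sub_mulVec, one_mulVec, smul_mulVec]
  congr 1
  have h : (Matrix.of fun i j => a i * a j) *ᵥ x = (a ⬝ᵥ x) • a := by
    funext i
    simp only [Matrix.mulVec, Matrix.of_apply, dotProduct, Pi.smul_apply, smul_eq_mul]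
    rw [Finset.sum_mul]
    refine Finset.sum_congr rfl fun j _ => ?_
    ring
  rw [h, smul_smul]

lemma toLin'_reflMat {m : ℕ} {a : Fin m → ℂ} (ha : ∑ i, a i ^ 2 = 1) :
    Matrix.toLin' (reflMat a) = rfl' (stdB m) a := by
  apply LinearMap.ext
  intro x
  rw [Matrix.toLin'_apply, reflMat_mulVec, rfl'_apply, stdB_apply, stdB_self, ha, div_one]

lemma reflSet_sub (m : ℕ) :
    reflSet (stdB m) ⊆ ⇑Matrix.toLin' '' (reflTset m) := by
  rintro f ⟨v, hv, rfl⟩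
  have hvv : stdB m v v ≠ 0 := hv
  obtain ⟨c, hc⟩ := IsAlgClosed.exists_pow_nat_eq ((stdB m v v)⁻¹) (n := 2) (by norm_num)
  have hc0 : c ≠ 0 := by
    intro h
    rw [h] at hc
    simp only [zero_pow, ne_eq, OfNat.ofNat_ne_zero, not_false_eq_true] at hc
    exact hvv (by
      have := hc.symm
      rwa [inv_eq_zero] at this)
  have ha : ∑ i, (c • v) i ^ 2 = 1 := by
    have h1 : ∑ i, (c • v) i ^ 2 = c ^ 2 * ∑ i, v i ^ 2 := by
      rw [Finset.mul_sum]
      refine Finset.sum_congr rfl fun i _ => ?_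
      simp [mul_pow]
    rw [h1, hc, ← stdB_self, inv_mul_cancel₀ hvv]
  refine ⟨reflMat (c • v), ⟨c • v, ha, rfl⟩, ?_⟩
  rw [toLin'_reflMat ha, rfl'_smul hvv hc0]

lemma mat_mem_closure {m : ℕ} {M : Matrix (Fin m) (Fin m) ℂ} (hM : Mᵀ * M = 1) :
    M ∈ Submonoid.closure (reflTset m) := by
  have horth : ∀ x y, stdB m (Matrix.toLin' M x) (Matrix.toLin' M y) = stdB m x y := by
    intro x y
    rw [Matrix.toLin'_apply, Matrix.toLin'_apply, stdB_apply, stdB_apply,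
      dotProduct_mulVec, ← mulVec_transpose, mulVec_mulVec, hM, one_mulVec]
  have hf : Matrix.toLin' M ∈ Submonoid.closure (reflSet (stdB m)) :=
    cartan_dieudonne m (Fin m → ℂ) (Module.finrank_fin_fun ℂ) (stdB m) (stdB_symm m)
      (stdB_nondeg m) _ horth
  have h2 : Matrix.toLin' M ∈ Submonoid.closure (⇑Matrix.toLin' '' (reflTset m)) :=
    Submonoid.closure_mono (reflSet_sub m) hf
  have h3 : (⇑Matrix.toLin' '' (reflTset m)) = ⇑(Matrix.toLinAlgEquiv' (R := ℂ) (n := Fin m)).toRingEquiv.toMonoidHom '' (reflTset m) := rfl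
  rw [h3, ← MonoidHom.map_mclosure] at h2
  obtain ⟨N, hN, hNM⟩ := h2
  have : N = M := by
    apply Matrix.toLinAlgEquiv'.injective
    exact hNM
  rwa [← this]

lemma det_reflMat {m : ℕ} {a : Fin m → ℂ} (ha : ∑ i, a i ^ 2 = 1) :
    (reflMat a).det = -1 := by
  have h : reflMat a = 1 + replicateCol Unit ((-2 : ℂ) • a) * replicateRow Unit a := by
    ext i j
    simp only [reflMat, Matrix.sub_apply, Matrix.one_apply, Matrix.add_apply,
      Matrix.smul_apply, Matrix.of_apply, smul_eq_mul, Matrix.mul_apply, Matrix.replicateCol_apply,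
      Matrix.replicateRow_apply, Finset.univ_unique, Finset.sum_singleton, Pi.smul_apply]
    ring
  rw [h, det_one_add_replicateCol_mul_replicateRow]
  have h2 : a ⬝ᵥ ((-2 : ℂ) • a) = -2 := by
    have : a ⬝ᵥ ((-2 : ℂ) • a) = -2 * ∑ i, a i ^ 2 := by
      simp only [dotProduct, Pi.smul_apply, smul_eq_mul, Finset.mul_sum]
      refine Finset.sum_congr rfl fun i _ => ?_
      ring
    rw [this, ha, mul_one]
  rw [h2]
  norm_num

lemma list_pairs {m : ℕ} : ∀ (k : ℕ) (L : List (Matrix (Fin m) (Fin m) ℂ)),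
    L.length = 2 * k → (∀ x ∈ L, x ∈ reflTset m) →
    L.prod ∈ Submonoid.closure (pairTset m) := by
  intro k
  induction k with
  | zero =>
      intro L h _
      have : L = [] := List.length_eq_zero_iff.mp (by omega)
      rw [this]
      simp only [List.prod_nil]
      exact one_mem _
  | succ k ihk =>
      intro L hlen hmem
      match L with
      | [] => simp at hlen
      | [x] => simp at hlen; omega
      | x :: y :: L' =>
          obtain ⟨a, ha, rfl⟩ := hmem x (by simp)
          obtain ⟨b, hb, rfl⟩ := hmem y (by simp)
          rw [List.prod_cons, List.prod_cons, ← mul_assoc]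
          refine mul_mem (Submonoid.subset_closure ⟨a, b, ha, hb, rfl⟩) ?_
          refine ihk L' ?_ (fun z hz => hmem z (by simp [hz]))
          simp only [List.length_cons] at hlen
          omega

lemma so_mem_pairs {m : ℕ} {M : Matrix (Fin m) (Fin m) ℂ} (hM : Mᵀ * M = 1)
    (hdet : M.det = 1) : M ∈ Submonoid.closure (pairTset m) := by
  obtain ⟨L, hL, hprod⟩ := Submonoid.exists_list_of_mem_closure (mat_mem_closure hM)
  have hdets : (L.map Matrix.det).prod = M.det := by
    rw [← hprod]
    exact (Matrix.detMonoidHom.map_list_prod L).symm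
  have hpow : ((-1 : ℂ)) ^ L.length = 1 := by
    have h1 : (L.map Matrix.det).prod = (-1 : ℂ) ^ (L.map Matrix.det).length := by
      apply List.prod_eq_pow_card
      intro x hx
      obtain ⟨N, hN, rfl⟩ := List.mem_map.mp hx
      obtain ⟨a, ha, rfl⟩ := hL N hN
      exact det_reflMat ha
    rw [List.length_map] at h1
    rw [← h1, hdets, hdet]
  have heven : Even L.length := (neg_one_pow_eq_one_iff_even (by norm_num)).mp hpow
  obtain ⟨k, hk⟩ := heven
  rw [← hprod]
  exact list_pairs k L (by omega) hL


lemma reflMat_transpose {m : ℕ} (a : Fin m → ℂ) : (reflMat a)ᵀ = reflMat a := by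
  ext i j
  simp only [reflMat, Matrix.transpose_apply, Matrix.sub_apply, Matrix.smul_apply,
    Matrix.of_apply, Matrix.one_apply, smul_eq_mul]
  by_cases h : i = j
  · simp [h, mul_comm]
  · simp [h, Ne.symm h, mul_comm]

lemma reflMat_mul_self {m : ℕ} {a : Fin m → ℂ} (ha : ∑ i, a i ^ 2 = 1) :
    reflMat a * reflMat a = 1 := by
  have hP : (Matrix.of fun i j => a i * a j) * (Matrix.of fun i j => a i * a j)
      = Matrix.of fun i j => a i * a j := by
    ext i j
    simp only [Matrix.mul_apply, Matrix.of_apply]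
    have h1 : ∑ k, (a i * a k) * (a k * a j) = (a i * a j) * ∑ k, a k ^ 2 := by
      rw [Finset.mul_sum]
      exact Finset.sum_congr rfl fun k _ => by ring
    rw [h1, ha, mul_one]
  simp only [reflMat, sub_mul, mul_sub, Matrix.one_mul, Matrix.mul_one, Matrix.smul_mul,
    Matrix.mul_smul, hP, smul_smul]
  module

/-- the generating set -/
def Sgen (m : ℕ) : Set (ℂˣ × GL (Fin m) ℂ) :=
  {p | ∃ a b : Fin m → ℂ, (∑ i, a i ^ 2 = 1) ∧ (∑ i, b i ^ 2 = 1) ∧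
    (p.1 : ℂ) = Complex.I * Complex.I ∧
    (p.2 : Matrix (Fin m) (Fin m) ℂ) = reflMat a * reflMat b}

/-- the subgroup {±1} × SO -/
def Ksub (m : ℕ) : Subgroup (ℂˣ × GL (Fin m) ℂ) where
  carrier := {p | ((p.1 : ℂ) = 1 ∨ (p.1 : ℂ) = -1) ∧
    (p.2 : Matrix (Fin m) (Fin m) ℂ)ᵀ * (p.2 : Matrix (Fin m) (Fin m) ℂ) = 1 ∧
    (p.2 : Matrix (Fin m) (Fin m) ℂ).det = 1}
  one_mem' := ⟨Or.inl rfl, by simp, by simp⟩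
  mul_mem' := by
    rintro p q ⟨hp1, hp2, hp3⟩ ⟨hq1, hq2, hq3⟩
    refine ⟨?_, ?_, ?_⟩
    · rcases hp1 with h | h <;> rcases hq1 with h' | h' <;>
        simp [Units.val_mul, h, h']
    · have he : ((p * q).2 : Matrix (Fin m) (Fin m) ℂ)
          = (p.2 : Matrix (Fin m) (Fin m) ℂ) * (q.2 : Matrix (Fin m) (Fin m) ℂ) := rfl
      rw [he, Matrix.transpose_mul, Matrix.mul_assoc,
        ← Matrix.mul_assoc ((p.2 : Matrix (Fin m) (Fin m) ℂ))ᵀ, hp2, Matrix.one_mul, hq2]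
    · have he : ((p * q).2 : Matrix (Fin m) (Fin m) ℂ)
          = (p.2 : Matrix (Fin m) (Fin m) ℂ) * (q.2 : Matrix (Fin m) (Fin m) ℂ) := rfl
      rw [he, Matrix.det_mul, hp3, hq3, mul_one]
  inv_mem' := by
    rintro p ⟨hp1, hp2, hp3⟩
    have h2inv : p⁻¹.2 = p.2⁻¹ := rfl
    have hinv : ((p.2⁻¹ : GL (Fin m) ℂ) : Matrix (Fin m) (Fin m) ℂ) = (p.2 : Matrix (Fin m) (Fin m) ℂ)ᵀ := by
      have h1 : (p.2 : Matrix (Fin m) (Fin m) ℂ) * ((p.2⁻¹ : GL (Fin m) ℂ) : Matrix (Fin m) (Fin m) ℂ) = 1 := by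
        rw [← Units.val_mul, mul_inv_cancel, Units.val_one]
      calc ((p.2⁻¹ : GL (Fin m) ℂ) : Matrix (Fin m) (Fin m) ℂ)
          = 1 * ((p.2⁻¹ : GL (Fin m) ℂ) : Matrix (Fin m) (Fin m) ℂ) := (Matrix.one_mul _).symm
        _ = (p.2 : Matrix (Fin m) (Fin m) ℂ)ᵀ * ((p.2 : Matrix (Fin m) (Fin m) ℂ) * ((p.2⁻¹ : GL (Fin m) ℂ) : Matrix (Fin m) (Fin m) ℂ)) := by
            rw [← Matrix.mul_assoc, hp2, Matrix.one_mul]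
        _ = (p.2 : Matrix (Fin m) (Fin m) ℂ)ᵀ := by rw [h1, Matrix.mul_one]
    refine ⟨?_, ?_, ?_⟩
    · show ((p.1⁻¹ : ℂˣ) : ℂ) = 1 ∨ ((p.1⁻¹ : ℂˣ) : ℂ) = -1
      rcases hp1 with h | h
      · left; rw [Units.val_inv_eq_inv_val, h]; norm_num
      · right; rw [Units.val_inv_eq_inv_val, h]; norm_num
    · show ((p⁻¹.2 : GL (Fin m) ℂ) : Matrix (Fin m) (Fin m) ℂ)ᵀ
          * ((p⁻¹.2 : GL (Fin m) ℂ) : Matrix (Fin m) (Fin m) ℂ) = 1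
      rw [h2inv, hinv, Matrix.transpose_transpose]
      exact mul_eq_one_comm.mp hp2
    · show ((p⁻¹.2 : GL (Fin m) ℂ) : Matrix (Fin m) (Fin m) ℂ).det = 1
      rw [h2inv, hinv, Matrix.det_transpose, hp3]

lemma Sgen_sub_K (m : ℕ) : Sgen m ⊆ (Ksub m : Set (ℂˣ × GL (Fin m) ℂ)) := by
  rintro p ⟨a, b, ha, hb, h1, h2⟩
  refine ⟨Or.inr (by rw [h1, Complex.I_mul_I]), ?_, ?_⟩
  · rw [h2, Matrix.transpose_mul, reflMat_transpose, reflMat_transpose,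
      Matrix.mul_assoc, ← Matrix.mul_assoc (reflMat a), reflMat_mul_self ha, Matrix.one_mul,
      reflMat_mul_self hb]
  · rw [h2, Matrix.det_mul, det_reflMat ha, det_reflMat hb]; norm_num

lemma exists_unit_vec {m : ℕ} (hm : 1 ≤ m) : ∃ a : Fin m → ℂ, ∑ i, a i ^ 2 = 1 := by
  refine ⟨Pi.single ⟨0, hm⟩ 1, ?_⟩
  rw [Finset.sum_eq_single (⟨0, hm⟩ : Fin m)]
  · simp
  · intro i _ hne
    rw [Pi.single_eq_of_ne hne]
    norm_num
  · intro h; exact absurd (Finset.mem_univ _) h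

lemma neg_one_mem {m : ℕ} (hm : 1 ≤ m) :
    ((-1 : ℂˣ), (1 : GL (Fin m) ℂ)) ∈ Subgroup.closure (Sgen m) := by
  obtain ⟨a, ha⟩ := exists_unit_vec hm
  apply Subgroup.subset_closure
  refine ⟨a, a, ha, ha, by rw [Complex.I_mul_I]; simp, ?_⟩
  rw [reflMat_mul_self ha]
  exact Units.val_one

lemma step2 {m : ℕ} {M : Matrix (Fin m) (Fin m) ℂ}
    (hM : M ∈ Submonoid.closure (pairTset m)) :
    ∃ G : GL (Fin m) ℂ, (G : Matrix (Fin m) (Fin m) ℂ) = M ∧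
      ∃ ε : ℂˣ, ((ε : ℂ) = 1 ∨ (ε : ℂ) = -1) ∧ (ε, G) ∈ Subgroup.closure (Sgen m) := by
  induction hM using Submonoid.closure_induction with
  | mem N hN =>
      obtain ⟨a, b, ha, hb, rfl⟩ := hN
      refine ⟨⟨reflMat a * reflMat b, reflMat b * reflMat a, ?_, ?_⟩, rfl, -1, ?_, ?_⟩
      · rw [Matrix.mul_assoc, ← Matrix.mul_assoc (reflMat b), reflMat_mul_self hb,
          Matrix.one_mul, reflMat_mul_self ha]
      · rw [Matrix.mul_assoc, ← Matrix.mul_assoc (reflMat a), reflMat_mul_self ha,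
          Matrix.one_mul, reflMat_mul_self hb]
      · right; simp
      · exact Subgroup.subset_closure ⟨a, b, ha, hb, by rw [Complex.I_mul_I]; simp, rfl⟩
  | one => exact ⟨1, Units.val_one, 1, Or.inl rfl, one_mem _⟩
  | mul N₁ N₂ _ _ ih1 ih2 =>
      obtain ⟨G₁, hG₁, ε₁, hε₁, hm₁⟩ := ih1
      obtain ⟨G₂, hG₂, ε₂, hε₂, hm₂⟩ := ih2
      refine ⟨G₁ * G₂, by rw [Units.val_mul, hG₁, hG₂], ε₁ * ε₂, ?_, mul_mem hm₁ hm₂⟩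
      rcases hε₁ with h | h <;> rcases hε₂ with h' | h' <;> simp [Units.val_mul, h, h']

lemma char {m : ℕ} (hm : 1 ≤ m) (p : ℂˣ × GL (Fin m) ℂ) :
    p ∈ Subgroup.closure (Sgen m) ↔ p ∈ Ksub m := by
  constructor
  · intro hp
    exact (Subgroup.closure_le (Ksub m)).mpr (Sgen_sub_K m) hp
  · rintro ⟨h1, h2, h3⟩
    obtain ⟨G, hG, ε, hε, hmem⟩ := step2 (so_mem_pairs h2 h3)
    have hGp : G = p.2 := Units.ext hG
    rw [hGp] at hmem
    have hpe : p = (p.1, p.2) := rfl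
    rcases h1 with h | h <;> rcases hε with h' | h'
    · have he : p.1 = ε := Units.ext (by rw [h, h'])
      rw [hpe, he]; exact hmem
    · have hp1 : p = ((-1 : ℂˣ), (1 : GL (Fin m) ℂ)) * (ε, p.2) := by
        refine Prod.ext_iff.mpr ⟨Units.ext ?_, (one_mul _).symm⟩
        show (p.1 : ℂ) = ((-1 : ℂˣ) * ε : ℂˣ)
        rw [Units.val_mul, h, h']; norm_num
      rw [hp1]; exact mul_mem (neg_one_mem hm) hmem
    · have hp1 : p = ((-1 : ℂˣ), (1 : GL (Fin m) ℂ)) * (ε, p.2) := by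
        refine Prod.ext_iff.mpr ⟨Units.ext ?_, (one_mul _).symm⟩
        show (p.1 : ℂ) = ((-1 : ℂˣ) * ε : ℂˣ)
        rw [Units.val_mul, h, h']; norm_num
      rw [hp1]; exact mul_mem (neg_one_mem hm) hmem
    · have he : p.1 = ε := Units.ext (by rw [h, h'])
      rw [hpe, he]; exact hmem

def SOsub (m : ℕ) : Subgroup (GL (Fin m) ℂ) where
  carrier := {g | (g : Matrix (Fin m) (Fin m) ℂ)ᵀ * (g : Matrix (Fin m) (Fin m) ℂ) = 1 ∧
    (g : Matrix (Fin m) (Fin m) ℂ).det = 1}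
  one_mem' := ⟨by simp, by simp⟩
  mul_mem' := by
    rintro g h ⟨hg2, hg3⟩ ⟨hh2, hh3⟩
    have he : ((g * h : GL (Fin m) ℂ) : Matrix (Fin m) (Fin m) ℂ)
        = (g : Matrix (Fin m) (Fin m) ℂ) * (h : Matrix (Fin m) (Fin m) ℂ) := rfl
    constructor
    · rw [he, Matrix.transpose_mul, Matrix.mul_assoc,
        ← Matrix.mul_assoc ((g : Matrix (Fin m) (Fin m) ℂ))ᵀ, hg2, Matrix.one_mul, hh2]
    · rw [he, Matrix.det_mul, hg3, hh3, mul_one]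
  inv_mem' := by
    rintro g ⟨hg2, hg3⟩
    have hinv : ((g⁻¹ : GL (Fin m) ℂ) : Matrix (Fin m) (Fin m) ℂ)
        = (g : Matrix (Fin m) (Fin m) ℂ)ᵀ := by
      have h1 : (g : Matrix (Fin m) (Fin m) ℂ) * ((g⁻¹ : GL (Fin m) ℂ) : Matrix (Fin m) (Fin m) ℂ) = 1 := by
        rw [← Units.val_mul, mul_inv_cancel, Units.val_one]
      calc ((g⁻¹ : GL (Fin m) ℂ) : Matrix (Fin m) (Fin m) ℂ)
          = 1 * ((g⁻¹ : GL (Fin m) ℂ) : Matrix (Fin m) (Fin m) ℂ) := (Matrix.one_mul _).symm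
        _ = (g : Matrix (Fin m) (Fin m) ℂ)ᵀ * ((g : Matrix (Fin m) (Fin m) ℂ) * ((g⁻¹ : GL (Fin m) ℂ) : Matrix (Fin m) (Fin m) ℂ)) := by
            rw [← Matrix.mul_assoc, hg2, Matrix.one_mul]
        _ = (g : Matrix (Fin m) (Fin m) ℂ)ᵀ := by rw [h1, Matrix.mul_one]
    constructor
    · rw [hinv, Matrix.transpose_transpose]
      exact mul_eq_one_comm.mp hg2
    · rw [hinv, Matrix.det_transpose, hg3]

noncomputable def sgn {m : ℕ} (p : ℂˣ × GL (Fin m) ℂ) : Multiplicative (ZMod 2) :=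
  if (p.1 : ℂ) = 1 then 1 else Multiplicative.ofAdd 1

lemma sgn_val_one {m : ℕ} {p : ℂˣ × GL (Fin m) ℂ} (h : (p.1 : ℂ) = 1) : sgn p = 1 :=
  if_pos h

lemma sgn_val_neg {m : ℕ} {p : ℂˣ × GL (Fin m) ℂ} (h : (p.1 : ℂ) = -1) :
    sgn p = Multiplicative.ofAdd 1 :=
  if_neg (by rw [h]; norm_num)

lemma val_mul_fst {m : ℕ} (p q : ℂˣ × GL (Fin m) ℂ) :
    ((p * q).1 : ℂ) = (p.1 : ℂ) * (q.1 : ℂ) := by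
  rw [show (p * q).1 = p.1 * q.1 from rfl, Units.val_mul]

lemma sgn_mul {m : ℕ} (p q : ℂˣ × GL (Fin m) ℂ)
    (hp : (p.1 : ℂ) = 1 ∨ (p.1 : ℂ) = -1) (hq : (q.1 : ℂ) = 1 ∨ (q.1 : ℂ) = -1) :
    sgn (p * q) = sgn p * sgn q := by
  rcases hp with h | h <;> rcases hq with h' | h'
  · rw [sgn_val_one (by rw [val_mul_fst, h, h']; ring), sgn_val_one h, sgn_val_one h', one_mul]
  · rw [sgn_val_neg (by rw [val_mul_fst, h, h']; ring), sgn_val_one h, sgn_val_neg h', one_mul]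
  · rw [sgn_val_neg (by rw [val_mul_fst, h, h']; ring), sgn_val_neg h, sgn_val_one h', mul_one]
  · rw [sgn_val_one (by rw [val_mul_fst, h, h']; ring), sgn_val_neg h, sgn_val_neg h']
    decide

noncomputable def toProd {m : ℕ} (hm : 1 ≤ m) :
    (Subgroup.closure (Sgen m)) →* (SOsub m) × Multiplicative (ZMod 2) where
  toFun p := (⟨(p : ℂˣ × GL (Fin m) ℂ).2, ((char hm _).mp p.2).2⟩,
    sgn (p : ℂˣ × GL (Fin m) ℂ))
  map_one' := by
    refine Prod.ext_iff.mpr ⟨Subtype.ext rfl, ?_⟩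
    exact sgn_val_one Units.val_one
  map_mul' p q := by
    refine Prod.ext_iff.mpr ⟨Subtype.ext rfl, ?_⟩
    exact sgn_mul _ _ ((char hm _).mp p.2).1 ((char hm _).mp q.2).1

lemma toProd_bijective {m : ℕ} (hm : 1 ≤ m) : Function.Bijective (toProd hm) := by
  constructor
  · intro p q h
    obtain ⟨h1, h2⟩ := Prod.ext_iff.mp h
    have hsnd : (p : ℂˣ × GL (Fin m) ℂ).2 = (q : ℂˣ × GL (Fin m) ℂ).2 :=
      Subtype.ext_iff.mp h1
    have hone : (1 : Multiplicative (ZMod 2)) ≠ Multiplicative.ofAdd 1 := by decide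
    have h2' : sgn (p : ℂˣ × GL (Fin m) ℂ) = sgn (q : ℂˣ × GL (Fin m) ℂ) := h2
    have hfst : (p : ℂˣ × GL (Fin m) ℂ).1 = (q : ℂˣ × GL (Fin m) ℂ).1 := by
      rcases ((char hm _).mp p.2).1 with h3 | h3 <;> rcases ((char hm _).mp q.2).1 with h4 | h4
      · exact Units.ext (by rw [h3, h4])
      · rw [sgn_val_one h3, sgn_val_neg h4] at h2'; exact absurd h2' hone
      · rw [sgn_val_neg h3, sgn_val_one h4] at h2'; exact absurd h2'.symm hone
      · exact Units.ext (by rw [h3, h4])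
    exact Subtype.ext (Prod.ext_iff.mpr ⟨hfst, hsnd⟩)
  · rintro ⟨g, t⟩
    have ht : t = 1 ∨ t = Multiplicative.ofAdd 1 := by
      revert t; decide
    rcases ht with rfl | rfl
    · refine ⟨⟨((1 : ℂˣ), (g : GL (Fin m) ℂ)),
        (char hm _).mpr ⟨Or.inl Units.val_one, g.2.1, g.2.2⟩⟩, ?_⟩
      refine Prod.ext_iff.mpr ⟨Subtype.ext rfl, sgn_val_one Units.val_one⟩
    · refine ⟨⟨((-1 : ℂˣ), (g : GL (Fin m) ℂ)),
        (char hm _).mpr ⟨Or.inr (by simp), g.2.1, g.2.2⟩⟩, ?_⟩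
      refine Prod.ext_iff.mpr ⟨Subtype.ext rfl, sgn_val_neg (by simp)⟩

end CD7

theorem statement7 (m : ℕ) (hm : 1 ≤ m) :
    let S : Set (ℂˣ × GL (Fin m) ℂ) :=
      {p | ∃ a b : Fin m → ℂ, (∑ i, a i ^ 2 = 1) ∧ (∑ i, b i ^ 2 = 1) ∧
        (p.1 : ℂ) = Complex.I * Complex.I ∧
        (p.2 : Matrix (Fin m) (Fin m) ℂ) = reflMat a * reflMat b}
    -- the generated subgroup is exactly {(ε,g) : ε = ±1, g ∈ SO(m,ℂ)}
    (∀ p : ℂˣ × GL (Fin m) ℂ,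
      p ∈ Subgroup.closure S ↔
        (((p.1 : ℂ) = 1 ∨ (p.1 : ℂ) = -1) ∧
          (p.2 : Matrix (Fin m) (Fin m) ℂ)ᵀ * (p.2 : Matrix (Fin m) (Fin m) ℂ) = 1 ∧
          (p.2 : Matrix (Fin m) (Fin m) ℂ).det = 1)) ∧
    -- it is isomorphic to SO(m,ℂ) × ℤ/2ℤ
    (∃ H : Subgroup (GL (Fin m) ℂ),
      ((H : Set (GL (Fin m) ℂ)) = {g : GL (Fin m) ℂ | (g : Matrix (Fin m) (Fin m) ℂ)ᵀ *
          (g : Matrix (Fin m) (Fin m) ℂ) = 1 ∧ (g : Matrix (Fin m) (Fin m) ℂ).det = 1}) ∧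
      Nonempty ((Subgroup.closure S) ≃* H × Multiplicative (ZMod 2))) ∧
    -- the projection onto SO(m,ℂ) is surjective with fibers of exactly two elements
    (∀ g : GL (Fin m) ℂ,
      ((g : Matrix (Fin m) (Fin m) ℂ)ᵀ * (g : Matrix (Fin m) (Fin m) ℂ) = 1 ∧
        (g : Matrix (Fin m) (Fin m) ℂ).det = 1) →
      (∃ p ∈ Subgroup.closure S, p.2 = g) ∧
      ({p : ℂˣ × GL (Fin m) ℂ | p ∈ Subgroup.closure S ∧ p.2 = g}).ncard = 2) := by
  intro S
  have hS : S = CD7.Sgen m := rfl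
  refine ⟨?_, ?_, ?_⟩
  · intro p
    rw [hS]
    exact CD7.char hm p
  · refine ⟨CD7.SOsub m, rfl, ⟨?_⟩⟩
    rw [hS]
    exact MulEquiv.ofBijective (CD7.toProd hm) (CD7.toProd_bijective hm)
  · intro g hg
    rw [hS]
    constructor
    · exact ⟨((1 : ℂˣ), g), (CD7.char hm _).mpr ⟨Or.inl Units.val_one, hg.1, hg.2⟩, rfl⟩
    · have hset : {p : ℂˣ × GL (Fin m) ℂ | p ∈ Subgroup.closure (CD7.Sgen m) ∧ p.2 = g}
          = {((1 : ℂˣ), g), ((-1 : ℂˣ), g)} := by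
        ext p
        simp only [Set.mem_setOf_eq, Set.mem_insert_iff, Set.mem_singleton_iff]
        constructor
        · rintro ⟨hp, hpg⟩
          have hc := (CD7.char hm p).mp hp
          rcases hc.1 with h | h
          · left
            refine Prod.ext_iff.mpr ⟨Units.ext ?_, hpg⟩
            rw [h, Units.val_one]
          · right
            refine Prod.ext_iff.mpr ⟨Units.ext ?_, hpg⟩
            rw [h]; simp
        · rintro (rfl | rfl)
          · exact ⟨(CD7.char hm _).mpr ⟨Or.inl Units.val_one, hg.1, hg.2⟩, rfl⟩
          · exact ⟨(CD7.char hm _).mpr ⟨Or.inr (by simp), hg.1, hg.2⟩, rfl⟩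
      rw [hset]
      refine Set.ncard_pair ?_
      intro hcontra
      have h1 : (1 : ℂˣ) = (-1 : ℂˣ) := (Prod.ext_iff.mp hcontra).1
      have h2 := congrArg (fun u : ℂˣ => (u : ℂ)) h1
      simp only [Units.val_one, Units.val_neg] at h2
      norm_num at h2
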